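/- (Sufficiency soundness via case tests.) Assume: (SuffTP) for each case-test index i there exists a trace t' and instantiation ρ' with ctr(t') = {(i, ρ')} and cor(t') ⊆ blame(i, ρ'); (RepP) for every trace t, instantiation ρ with matches i ρ t, and every single-matched trace t' with ctr(t') = {(i, ρ')}, there exists a trace t'' with ctr(t'') = {(i, ρ)} and cor(t'') ⊆ blame(i, ρ) whenever cor(t') ⊆ blame(i, ρ'); (UniqTP) whenever matches i ρ t, blame(i, ρ) ⊆ cor(t); (RelI) if matches i ρ t and ctr(t') = {(i, ρ)} and cor(t') = blame(i, ρ) ⊆ cor(t), then r t t'. Then the Sufficiency verification condition holds: for all t and S ∈ vf t there exists t' with vf t' = {S}, cor t' ⊆ S, and r t t'. -/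
import Mathlib

theorem stmt12 {T P I R : Type*} [Finite I]
    (cor : T → Finset P) (r : T → T → Prop)
    (matchesP : I → R → T → Prop) (blame : I → R → Finset P)
    (ctr : T → Set (I × R))
    (hctr : ∀ t, ctr t = {p : I × R | matchesP p.1 p.2 t})
    (vf : T → Set (Finset P))
    (hvf : ∀ t, vf t = {S : Finset P | ∃ i ρ, matchesP i ρ t ∧ blame i ρ = S})
    (hSuffTP : ∀ i : I, ∃ (t' : T) (ρ' : R), ctr t' = {(i, ρ')} ∧ cor t' ⊆ blame i ρ')
    (hRepP : ∀ (i : I) (ρ : R) (t t' : T) (ρ' : R), matchesP i ρ t →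
      ctr t' = {(i, ρ')} → cor t' ⊆ blame i ρ' →
      ∃ t'', ctr t'' = {(i, ρ)} ∧ cor t'' ⊆ blame i ρ)
    (hUniqTP : ∀ (i : I) (ρ : R) (t : T), matchesP i ρ t → blame i ρ ⊆ cor t)
    (hRelI : ∀ (i : I) (ρ : R) (t t' : T), matchesP i ρ t → ctr t' = {(i, ρ)} →
      cor t' = blame i ρ → blame i ρ ⊆ cor t → r t t') :
    ∀ t S, S ∈ vf t → ∃ t', vf t' = {S} ∧ cor t' ⊆ S ∧ r t t' := by
  intro t S hS
  rw [hvf] at hS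
  obtain ⟨i, ρ, hm, hb⟩ := hS
  obtain ⟨t₀, ρ', hctr₀, hcor₀⟩ := hSuffTP i
  obtain ⟨t'', hctr'', hcor''⟩ := hRepP i ρ t t₀ ρ' hm hctr₀ hcor₀
  have hm'' : matchesP i ρ t'' := by
    have : (i, ρ) ∈ ctr t'' := by rw [hctr'']; rfl
    rwa [hctr] at this
  have hcoreq : cor t'' = blame i ρ :=
    Finset.Subset.antisymm hcor'' (hUniqTP i ρ t'' hm'')
  refine ⟨t'', ?_, ?_, ?_⟩
  · rw [hvf]
    ext S'
    simp only [Set.mem_setOf_eq, Set.mem_singleton_iff]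
    constructor
    · rintro ⟨j, σ, hmj, hbj⟩
      have : (j, σ) ∈ ctr t'' := by rw [hctr]; exact hmj
      rw [hctr''] at this
      rw [Set.mem_singleton_iff, Prod.mk.injEq] at this
      obtain ⟨h1, h2⟩ := this
      subst h1 h2 hbj; rw [← hb]
    · rintro rfl; exact ⟨i, ρ, hm'', hb⟩
  · rw [hcoreq, hb]
  · exact hRelI i ρ t t'' hm hctr'' hcoreq (hUniqTP i ρ t hm)
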